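/- Let (X_1, …, X_n) be a centered Gaussian random vector such that E[X_i X_j] ≥ 0 for all i ≠ j, and let m_1, …, m_n be positive integers. Then for every 1 ≤ k ≤ n−1, E[∏_{j=1}^{n} X_j^{2m_j}] ≥ E[∏_{j=1}^{k} X_j^{2m_j}] · E[∏_{j=k+1}^{n} X_j^{2m_j}]. -/

import Mathlib

open MeasureTheory ProbabilityTheory Finset
open scoped NNReal

/-- A centered (jointly) Gaussian random vector: every real-linear combination of the
components is a centered Gaussian random variable, and each component is non-degenerate. -/
def IsCenteredGaussianVec {Ω : Type*} [MeasureSpace Ω] {n : ℕ}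
    (X : Fin n → Ω → ℝ) : Prop :=
  (∀ i, Measurable (X i)) ∧
  (∀ a : Fin n → ℝ, ∃ v : ℝ≥0,
      Measure.map (fun ω => ∑ i, a i * X i ω) ℙ = gaussianReal 0 v) ∧
  (∀ i, ∃ v : ℝ≥0, 0 < v ∧ Measure.map (X i) ℙ = gaussianReal 0 v)

open Real Filter MvPolynomial
open scoped ENNReal

set_option linter.unusedSectionVars false
set_option linter.deprecated false
set_option linter.unusedVariables false
set_option maxHeartbeats 1000000

namespace GPIaux

noncomputable section




private def dfact : ℕ → ℕ
  | 0 => 1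
  | (M+1) => (2*M+1) * dfact M

private lemma dfact_mul (M : ℕ) :
    dfact M * (2^M * Nat.factorial M) = Nat.factorial (2*M) := by
  induction M with
  | zero => simp [dfact]
  | succ M ih =>
    have h2 : 2*(M+1) = (2*M+1)+1 := by ring
    have h3 : Nat.factorial (2*M+1+1) = (2*M+2)*((2*M+1)*Nat.factorial (2*M)) := by
      rw [Nat.factorial_succ, Nat.factorial_succ]
    rw [h2, h3, ← ih]
    show (2*M+1) * dfact M * (2^(M+1) * ((M+1) * Nat.factorial M)) = _
    rw [pow_succ]
    ring

private lemma pow_le_factorial_mul_exp (p : ℕ) {y : ℝ} (hy : 0 ≤ y) :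
    y^p ≤ p.factorial * Real.exp y := by
  have h := Real.sum_le_exp_of_nonneg hy (p+1)
  have h2 : y^p / p.factorial ≤ Real.exp y := by
    refine le_trans ?_ h
    exact Finset.single_le_sum (f := fun i => y^i / Nat.factorial i)
      (fun i _ => by positivity) (Finset.self_mem_range_succ p)
  have hp : (0:ℝ) < p.factorial := by exact_mod_cast Nat.factorial_pos p
  rw [div_le_iff₀ hp] at h2
  linarith

private lemma abs_sub_sq_le {b : ℝ} (hb : 0 < b) (x : ℝ) :
    |x| - b*x^2 ≤ 1/(2*b) + (-(b/2)*x^2) := by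
  have hbu : 2*b*(1/(2*b)) = 1 := by field_simp
  have key : 2*b*|x| ≤ 1 + (b*|x|)^2 := by nlinarith [sq_nonneg (b*|x|-1)]
  have h6 : 2*b*|x| ≤ 2*b*(1/(2*b) + (b/2)*|x|^2) := by
    rw [mul_add, hbu]
    nlinarith [key]
  have h7 : |x| ≤ 1/(2*b) + (b/2)*|x|^2 :=
    le_of_mul_le_mul_left (by linarith [h6]) (by positivity : (0:ℝ) < 2*b)
  have h8 : |x|^2 = x^2 := sq_abs x
  nlinarith [h7]

private lemma key_bound {b : ℝ} (hb : 0 < b) (p : ℕ) (x : ℝ) :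
    ‖x^p * Real.exp (-b*x^2)‖ ≤
      (p.factorial * Real.exp (1/(2*b))) * Real.exp (-(b/2)*x^2) := by
  have h1 : ‖x^p * Real.exp (-b*x^2)‖ = |x|^p * Real.exp (-b*x^2) := by
    rw [norm_mul, Real.norm_eq_abs, Real.norm_eq_abs, abs_pow,
      abs_of_nonneg (Real.exp_pos _).le]
  rw [h1]
  have h2 : |x|^p ≤ p.factorial * Real.exp |x| := pow_le_factorial_mul_exp p (abs_nonneg x)
  calc |x|^p * Real.exp (-b*x^2) ≤ (p.factorial * Real.exp |x|) * Real.exp (-b*x^2) :=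
        mul_le_mul_of_nonneg_right h2 (Real.exp_pos _).le
    _ = p.factorial * Real.exp (|x| - b*x^2) := by
        rw [mul_assoc, ← Real.exp_add]; ring_nf
    _ ≤ p.factorial * Real.exp (1/(2*b) + (-(b/2)*x^2)) := by
        have := abs_sub_sq_le hb x
        have hf : (0:ℝ) ≤ p.factorial := by positivity
        exact mul_le_mul_of_nonneg_left (Real.exp_le_exp.2 this) hf
    _ = (p.factorial * Real.exp (1/(2*b))) * Real.exp (-(b/2)*x^2) := by
        rw [Real.exp_add]; ring

private lemma integrable_pow_mul_exp {b : ℝ} (hb : 0 < b) (p : ℕ) :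
    Integrable (fun x : ℝ => x^p * Real.exp (-b*x^2)) := by
  have hmeas : AEStronglyMeasurable (fun x : ℝ => x^p * Real.exp (-b*x^2)) volume := by
    exact (Continuous.mul (continuous_pow p)
      ((continuous_const.mul (continuous_pow 2)).rexp)).aestronglyMeasurable
  refine Integrable.mono' (((integrable_exp_neg_mul_sq (by positivity : (0:ℝ) < b/2)).const_mul
    (p.factorial * Real.exp (1/(2*b))))) hmeas ?_
  filter_upwards with x
  exact key_bound hb p x

private lemma tendsto_pow_mul_exp_top {b : ℝ} (hb : 0 < b) (p : ℕ) :
    Tendsto (fun x : ℝ => x^p * Real.exp (-b*x^2)) atTop (nhds 0) := by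
  apply squeeze_zero_norm (key_bound hb p)
  have h1 : Tendsto (fun x : ℝ => -(b/2)*x^2) atTop atBot :=
    (tendsto_pow_atTop (two_ne_zero)).const_mul_atTop_of_neg (by linarith)
  have h2 : Tendsto (fun x : ℝ => Real.exp (-(b/2)*x^2)) atTop (nhds 0) :=
    Real.tendsto_exp_atBot.comp h1
  simpa using h2.const_mul (p.factorial * Real.exp (1/(2*b)))

private lemma tendsto_pow_mul_exp_bot {b : ℝ} (hb : 0 < b) (p : ℕ) :
    Tendsto (fun x : ℝ => x^p * Real.exp (-b*x^2)) atBot (nhds 0) := by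
  apply squeeze_zero_norm (key_bound hb p)
  have h2 : Tendsto (fun x : ℝ => Real.exp (-(b/2)*x^2)) atBot (nhds 0) := by
    have h3 : Tendsto (fun x : ℝ => Real.exp (-(b/2)*x^2)) atTop (nhds 0) := by
      exact Real.tendsto_exp_atBot.comp
        ((tendsto_pow_atTop (two_ne_zero)).const_mul_atTop_of_neg (by linarith))
    have h4 : (fun x : ℝ => Real.exp (-(b/2)*x^2)) ∘ (fun x => -x)
        = fun x : ℝ => Real.exp (-(b/2)*x^2) := by
      funext x; simp [neg_sq]
    have := h3.comp tendsto_neg_atBot_atTop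
    rwa [h4] at this
  simpa using h2.const_mul (p.factorial * Real.exp (1/(2*b)))

private lemma gauss_ibp {b : ℝ} (hb : 0 < b) (p : ℕ) :
    (2*b) * ∫ x : ℝ, x^(p+2) * Real.exp (-b*x^2) =
      (p+1 : ℝ) * ∫ x : ℝ, x^p * Real.exp (-b*x^2) := by
  set f := fun x : ℝ => x^(p+1) * Real.exp (-b*x^2) with hf
  set g := fun x : ℝ => (p+1 : ℝ) * (x^p * Real.exp (-b*x^2))
    - 2*b*(x^(p+2) * Real.exp (-b*x^2)) with hg
  have hderiv : ∀ x : ℝ, HasDerivAt f (g x) x := by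
    intro x
    have h1 : HasDerivAt (fun x : ℝ => x^(p+1)) ((p+1 : ℝ)*x^p) x := by
      simpa using hasDerivAt_pow (p+1) x
    have h2 : HasDerivAt (fun x : ℝ => Real.exp (-b*x^2)) ((-b*(2*x)) * Real.exp (-b*x^2)) x := by
      have h3 : HasDerivAt (fun x : ℝ => -b*x^2) (-b*(2*x)) x := by
        simpa using (hasDerivAt_pow 2 x).const_mul (-b)
      simpa [mul_comm] using h3.exp
    have : HasDerivAt f (((p+1 : ℝ)*x^p) * Real.exp (-b*x^2)
        + x^(p+1) * ((-b*(2*x)) * Real.exp (-b*x^2))) x := h1.mul h2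
    convert this using 1
    show (p+1 : ℝ) * (x^p * Real.exp (-b*x^2)) - 2*b*(x^(p+2) * Real.exp (-b*x^2)) = _
    ring
  have hint : Integrable g := by
    exact ((integrable_pow_mul_exp hb p).const_mul _).sub
      ((integrable_pow_mul_exp hb (p+2)).const_mul _)
  have h0 : ∫ x : ℝ, g x = 0 - 0 := by
    refine integral_of_hasDerivAt_of_tendsto hderiv hint ?_ ?_
    · exact tendsto_pow_mul_exp_bot hb (p+1)
    · exact tendsto_pow_mul_exp_top hb (p+1)
  rw [sub_zero] at h0
  rw [integral_sub ((integrable_pow_mul_exp hb p).const_mul _)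
    ((integrable_pow_mul_exp hb (p+2)).const_mul _),
    integral_const_mul, integral_const_mul] at h0
  linarith

private lemma gauss_moment_raw {b : ℝ} (hb : 0 < b) (M : ℕ) :
    ∫ x : ℝ, x^(2*M) * Real.exp (-b*x^2) =
      (dfact M : ℝ) / (2*b)^M * Real.sqrt (π / b) := by
  induction M with
  | zero => simpa [dfact] using integral_gaussian b
  | succ M ih =>
    have h2 : 2*(M+1) = (2*M)+2 := by ring
    have hbne : (2*b) ≠ 0 := by positivity
    have hibp := gauss_ibp hb (2*M)
    rw [ih] at hibp
    rw [h2]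
    have h4 : ∫ x : ℝ, x^(2*M+2) * Real.exp (-b*x^2)
        = ((2*(M:ℝ)+1) * ((dfact M : ℝ) / (2*b)^M * Real.sqrt (π / b))) / (2*b) := by
      rw [eq_div_iff hbne]
      push_cast at hibp ⊢
      linarith
    rw [h4]
    have h5 : (dfact (M+1) : ℝ) = (2*(M:ℝ)+1) * dfact M := by
      show ((2*M+1) * dfact M : ℕ) = (2*(M:ℝ)+1) * dfact M
      push_cast
      ring
    rw [h5, pow_succ]
    field_simp


private lemma integrable_pow_gaussianReal (v : ℝ≥0) (p : ℕ) :
    Integrable (fun x : ℝ => x^p) (gaussianReal 0 v) := by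
  rcases eq_or_ne v 0 with hv | hv
  · rw [hv, gaussianReal_zero_var]
    refine ⟨(measurable_id.pow_const p).aestronglyMeasurable, ?_⟩
    refine HasFiniteIntegral.of_bounded (C := ‖(0:ℝ)^p‖) ?_
    rw [MeasureTheory.ae_dirac_eq]
    exact Filter.eventually_pure.2 le_rfl
  · rw [gaussianReal_of_var_ne_zero _ hv, gaussianPDF_def,
      integrable_withDensity_iff ((measurable_gaussianPDFReal 0 v).ennreal_ofReal)
      (Filter.Eventually.of_forall fun x => ENNReal.ofReal_lt_top)]
    have hv' : (0:ℝ) < (v:ℝ) := by positivity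
    set b : ℝ := (2*(v:ℝ))⁻¹ with hbdef
    have hb : 0 < b := by positivity
    have heq : (fun x : ℝ => x^p * (ENNReal.ofReal (gaussianPDFReal 0 v x)).toReal)
        = fun x : ℝ => (Real.sqrt (2*π*(v:ℝ)))⁻¹ * (x^p * Real.exp (-b*x^2)) := by
      funext x
      rw [ENNReal.toReal_ofReal (gaussianPDFReal_nonneg 0 v x)]
      simp only [gaussianPDFReal_def]
      have harg : -(x-0)^2/(2*(v:ℝ)) = -b*x^2 := by
        rw [hbdef]; field_simp; ring
      rw [harg]
      ring
    rw [heq]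
    exact (integrable_pow_mul_exp hb p).const_mul _

private lemma integral_pow_gaussianReal (v : ℝ≥0) (M : ℕ) :
    ∫ x, x^(2*M) ∂(gaussianReal 0 v) = (dfact M : ℝ) * (v:ℝ)^M := by
  rcases eq_or_ne v 0 with hv | hv
  · rw [hv, gaussianReal_zero_var, integral_dirac]
    cases M with
    | zero => simp [dfact]
    | succ M => simp
  · have hv' : (0:ℝ) < (v:ℝ) := by positivity
    set b : ℝ := (2*(v:ℝ))⁻¹ with hbdef
    have hb : 0 < b := by positivity
    have hwd : gaussianReal 0 v
        = volume.withDensity fun x => ((Real.toNNReal (gaussianPDFReal 0 v x) : ℝ≥0) : ℝ≥0∞) := by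
      rw [gaussianReal_of_var_ne_zero _ hv, gaussianPDF_def]
      rfl
    rw [hwd, integral_withDensity_eq_integral_smul
      ((measurable_gaussianPDFReal 0 v).real_toNNReal) (fun x => x^(2*M))]
    have heq : (fun x : ℝ => Real.toNNReal (gaussianPDFReal 0 v x) • x^(2*M))
        = fun x : ℝ => (Real.sqrt (2*π*(v:ℝ)))⁻¹ * (x^(2*M) * Real.exp (-b*x^2)) := by
      funext x
      rw [NNReal.smul_def, Real.coe_toNNReal _ (gaussianPDFReal_nonneg 0 v x)]
      simp only [gaussianPDFReal_def]
      have harg : -(x-0)^2/(2*(v:ℝ)) = -b*x^2 := by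
        rw [hbdef]; field_simp; ring
      rw [harg]
      simp only [smul_eq_mul]
      ring
    rw [heq, integral_const_mul, gauss_moment_raw hb M]
    have h2b : 2*b = ((v:ℝ))⁻¹ := by rw [hbdef]; field_simp
    have hpb : π/b = 2*π*(v:ℝ) := by rw [hbdef]; field_simp
    rw [h2b, hpb]
    have hs : Real.sqrt (2*π*(v:ℝ)) ≠ 0 := by positivity
    field_simp
    rw [one_div, inv_pow, mul_assoc, inv_mul_cancel₀ (pow_ne_zero _ hv'.ne'), mul_one]


variable {n : ℕ}

/-- Nonnegativity of all coefficients. -/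
private def NN (P : MvPolynomial (Fin n) ℝ) : Prop := ∀ d, 0 ≤ coeff d P

private lemma NN.add {P R : MvPolynomial (Fin n) ℝ} (hP : NN P) (hR : NN R) : NN (P + R) :=
  fun d => by rw [coeff_add]; exact add_nonneg (hP d) (hR d)

private lemma NN.mul {P R : MvPolynomial (Fin n) ℝ} (hP : NN P) (hR : NN R) : NN (P * R) := by
  classical
  intro d
  rw [coeff_mul]
  exact Finset.sum_nonneg fun x _ => mul_nonneg (hP _) (hR _)

private lemma NN.pow {P : MvPolynomial (Fin n) ℝ} (hP : NN P) (M : ℕ) : NN (P ^ M) := by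
  induction M with
  | zero => intro d; rw [pow_zero, ← C_1, coeff_C]; split <;> norm_num
  | succ M ih => rw [pow_succ]; exact ih.mul hP

private lemma NN.sum {ι : Type*} {s : Finset ι} {f : ι → MvPolynomial (Fin n) ℝ}
    (h : ∀ i ∈ s, NN (f i)) : NN (∑ i ∈ s, f i) := by
  intro d
  rw [coeff_sum]
  exact Finset.sum_nonneg fun i hi => h i hi d

private lemma NN.C {a : ℝ} (ha : 0 ≤ a) : NN (MvPolynomial.C a : MvPolynomial (Fin n) ℝ) := by
  classical
  intro d
  rw [coeff_C]
  split <;> simp [ha]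

private lemma NN.X (i : Fin n) : NN (MvPolynomial.X i : MvPolynomial (Fin n) ℝ) := by
  classical
  intro d
  rw [coeff_X']
  split <;> norm_num

private lemma NN.zero : NN (0 : MvPolynomial (Fin n) ℝ) := fun d => by simp

private lemma NN.natCast (u : ℕ) : NN ((u : MvPolynomial (Fin n) ℝ)) := by
  rw [← map_natCast (MvPolynomial.C (σ := Fin n) (R := ℝ)) u]
  exact NN.C (by positivity)

private lemma coeff_mul_ge {P R : MvPolynomial (Fin n) ℝ} (hP : NN P) (hR : NN R)
    (d1 d2 : Fin n →₀ ℕ) :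
    coeff d1 P * coeff d2 R ≤ coeff (d1 + d2) (P * R) := by
  classical
  rw [coeff_mul]
  have hmem : (d1, d2) ∈ Finset.HasAntidiagonal.antidiagonal (d1 + d2) := Finset.HasAntidiagonal.mem_antidiagonal.2 rfl
  have h := Finset.single_le_sum
    (f := fun x : (Fin n →₀ ℕ) × (Fin n →₀ ℕ) => coeff x.1 P * coeff x.2 R)
    (fun x _ => mul_nonneg (hP _) (hR _)) hmem
  exact h

private lemma coeff_add_pow_ge {P R : MvPolynomial (Fin n) ℝ} (hP : NN P) (hR : NN R)
    (s t : ℕ) (d : Fin n →₀ ℕ) :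
    (Nat.choose (s+t) s : ℝ) * coeff d (P^s * R^t) ≤ coeff d ((P + R)^(s+t)) := by
  classical
  rw [add_pow, coeff_sum]
  have hmem : s ∈ Finset.range (s+t+1) := by
    rw [Finset.mem_range]; omega
  have h1 : ∀ u ∈ Finset.range (s+t+1),
      0 ≤ coeff d (P^u * R^(s+t-u) * ((s+t).choose u : MvPolynomial (Fin n) ℝ)) :=
    fun u _ => ((((hP.pow u).mul (hR.pow _))).mul (NN.natCast _)) d
  have h2 := Finset.single_le_sum h1 hmem
  refine le_trans (le_of_eq ?_) h2
  rw [Nat.add_sub_cancel_left, ← map_natCast (MvPolynomial.C (σ := Fin n) (R := ℝ)),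
    mul_comm (P^s * R^t) _, coeff_C_mul]

/-- weighted degree of an exponent vector -/
private def W (w : Fin n → ℕ) (d : Fin n →₀ ℕ) : ℕ := ∑ i, w i * d i

private lemma W_add (w : Fin n → ℕ) (d1 d2 : Fin n →₀ ℕ) : W w (d1 + d2) = W w d1 + W w d2 := by
  unfold W
  rw [← Finset.sum_add_distrib]
  exact Finset.sum_congr rfl fun i _ => by rw [Finsupp.add_apply, mul_add]

private lemma W_zero (w : Fin n → ℕ) : W w 0 = 0 := by simp [W]

private lemma support_mul_W {w : Fin n → ℕ} {P R : MvPolynomial (Fin n) ℝ} {p q : ℕ}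
    (hP : ∀ d ∈ P.support, p ≤ W w d) (hR : ∀ d ∈ R.support, q ≤ W w d) :
    ∀ d ∈ (P * R).support, p + q ≤ W w d := by
  classical
  intro d hd
  have := MvPolynomial.support_mul P R hd
  rw [Finset.mem_add] at this
  obtain ⟨d1, hd1, d2, hd2, rfl⟩ := this
  rw [W_add]
  exact add_le_add (hP d1 hd1) (hR d2 hd2)

private lemma support_pow_W {w : Fin n → ℕ} {S : MvPolynomial (Fin n) ℝ}
    (hS : ∀ d ∈ S.support, 1 ≤ W w d) (t : ℕ) :
    ∀ d ∈ (S^t).support, t ≤ W w d := by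
  induction t with
  | zero =>
    intro d hd
    exact Nat.zero_le _
  | succ t ih =>
    rw [pow_succ]
    intro d hd
    have := support_mul_W ih hS d hd
    omega

private lemma coeff_restrict {w : Fin n → ℕ} {P S : MvPolynomial (Fin n) ℝ}
    (hS : ∀ d ∈ S.support, 1 ≤ W w d) (M : ℕ) {d : Fin n →₀ ℕ} (hd : W w d = 0) :
    coeff d ((P + S)^M) = coeff d (P^M) := by
  classical
  rw [add_pow, coeff_sum]
  rw [Finset.sum_eq_single_of_mem M (by rw [Finset.mem_range]; omega)]
  · simp
  · intro u hu huM
    rw [Finset.mem_range] at hu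
    have h1 : 1 ≤ M - u := by omega
    -- every monomial in the support of P^u * S^(M-u) * C has weight ≥ M-u ≥ 1
    have hP0 : ∀ e ∈ (P^u).support, 0 ≤ W w e := fun e _ => Nat.zero_le _
    have hS' := support_pow_W hS (M - u)
    have hPS := support_mul_W hP0 hS' (p := 0) (q := M - u)
    have hC : ∀ e ∈ ((M.choose u : MvPolynomial (Fin n) ℝ)).support, 0 ≤ W w e :=
      fun e _ => Nat.zero_le _
    have hfin := support_mul_W hPS hC (q := 0)
    by_contra hne
    have hd' : d ∈ (P^u * S^(M-u) * (M.choose u : MvPolynomial (Fin n) ℝ)).support :=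
      MvPolynomial.mem_support_iff.2 hne
    have := hfin d hd'
    omega

variable {Ω : Type*} [MeasureSpace Ω] [IsProbabilityMeasure (ℙ : Measure Ω)] {n : ℕ}
  {X : Fin n → Ω → ℝ}

private lemma prod_abs_le (hn : 0 < n) (c : Fin n → ℕ) (y : Fin n → ℝ) :
    ∏ j, |y j| ^ c j ≤ ∑ j, |y j| ^ (∑ i, c i) := by
  obtain ⟨j₀, -, hj₀⟩ := Finset.exists_max_image Finset.univ (fun j => |y j|)
    (univ_nonempty_iff.2 (Fin.pos_iff_nonempty.mp hn))
  calc ∏ j, |y j| ^ c j ≤ ∏ j, |y j₀| ^ c j := by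
        refine Finset.prod_le_prod (fun j _ => by positivity) (fun j _ => ?_)
        exact pow_le_pow_left₀ (abs_nonneg _) (hj₀ j (Finset.mem_univ j)) _
    _ = |y j₀| ^ (∑ i, c i) := Finset.prod_pow_eq_pow_sum _ _ _
    _ ≤ ∑ j, |y j| ^ (∑ i, c i) :=
        Finset.single_le_sum (f := fun j => |y j| ^ (∑ i, c i))
          (fun j _ => by positivity) (Finset.mem_univ j₀)

private lemma hXmeas (hX : ∀ i, Measurable (X i)) (c : Fin n → ℕ) :
    Measurable (fun ω => ∏ j, X j ω ^ c j) :=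
  Finset.measurable_prod _ (fun j _ => (hX j).pow_const (c j))

private lemma integrable_pow_X (hX : IsCenteredGaussianVec X) (i : Fin n) (p : ℕ) :
    Integrable (fun ω => X i ω ^ p) ℙ := by
  obtain ⟨v, -, hmap⟩ := hX.2.2 i
  have h := integrable_pow_gaussianReal v p
  rw [← hmap] at h
  exact (integrable_map_measure ((measurable_id.pow_const p).aestronglyMeasurable)
    (hX.1 i).aemeasurable).1 h

private lemma integrable_prod_X (hn : 0 < n) (hX : IsCenteredGaussianVec X) (c : Fin n → ℕ) :
    Integrable (fun ω => ∏ j, X j ω ^ c j) ℙ := by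
  set C := ∑ i, c i with hC
  refine Integrable.mono' (g := fun ω => ∑ j, |X j ω| ^ C)
    (integrable_finset_sum _ (fun j _ => ?_))
    (hXmeas hX.1 c).aestronglyMeasurable ?_
  · have : (fun ω => |X j ω| ^ C) = fun ω => |X j ω ^ C| := by
      funext ω; rw [abs_pow]
    rw [this]
    exact (integrable_pow_X hX j C).abs
  · filter_upwards with ω
    have h1 : ‖∏ j, X j ω ^ c j‖ = ∏ j, |X j ω| ^ c j := by
      rw [Real.norm_eq_abs, Finset.abs_prod]
      exact Finset.prod_congr rfl (fun j _ => abs_pow _ _)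
    rw [h1]
    exact prod_abs_le hn c (fun j => X j ω)

private lemma integrable_mul_X (hn : 0 < n) (hX : IsCenteredGaussianVec X) (i j : Fin n) :
    Integrable (fun ω => X i ω * X j ω) ℙ := by
  have h := integrable_prod_X hn hX (fun t => (if t = i then 1 else 0) + (if t = j then 1 else 0))
  have heq : (fun ω => ∏ t, X t ω ^ ((if t = i then 1 else 0) + (if t = j then 1 else 0)))
      = fun ω => X i ω * X j ω := by
    funext ω
    simp only [pow_add]
    rw [Finset.prod_mul_distrib]
    congr 1 <;> simp [pow_ite, Finset.prod_ite_eq']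
  rwa [heq] at h

/-- The covariance matrix entries. -/
private def covM (X : Fin n → Ω → ℝ) : Fin n → Fin n → ℝ := fun i j => ∫ ω, X i ω * X j ω ∂ℙ

/-- The covariance quadratic form, as a multivariate polynomial. -/
private def Qpoly (X : Fin n → Ω → ℝ) : MvPolynomial (Fin n) ℝ :=
  ∑ i, ∑ j, MvPolynomial.C (covM X i j) * MvPolynomial.X i * MvPolynomial.X j

private lemma moment_linear (hn : 0 < n) (hX : IsCenteredGaussianVec X) (a : Fin n → ℝ) (M : ℕ) :
    ∫ ω, (∑ i, a i * X i ω)^(2*M) ∂ℙ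
      = (dfact M : ℝ) * (∑ i, ∑ j, a i * a j * covM X i j)^M := by
  obtain ⟨v, hmap⟩ := hX.2.1 a
  have hYmeas : Measurable (fun ω => ∑ i, a i * X i ω) :=
    Finset.measurable_sum _ (fun i _ => (hX.1 i).const_mul (a i))
  have hint : ∀ p : ℕ, ∫ ω, (∑ i, a i * X i ω)^p ∂ℙ = ∫ x, x^p ∂(gaussianReal 0 v) := by
    intro p
    rw [← hmap]
    exact (integral_map (φ := fun ω => ∑ i, a i * X i ω) hYmeas.aemeasurable
      (f := fun x => x^p) (by fun_prop)).symm
  have hvar : (v : ℝ) = ∑ i, ∑ j, a i * a j * covM X i j := by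
    have h1 := hint 2
    rw [show (2:ℕ) = 2*1 by norm_num] at h1
    rw [integral_pow_gaussianReal v 1] at h1
    have h2 : ∫ ω, (∑ i, a i * X i ω)^(2*1) ∂ℙ = ∑ i, ∑ j, a i * a j * covM X i j := by
      have hpt : (fun ω => (∑ i, a i * X i ω)^(2*1))
          = fun ω => ∑ i, ∑ j, a i * a j * (X i ω * X j ω) := by
        funext ω
        rw [show (2*1 : ℕ) = 2 from rfl, sq, Finset.sum_mul_sum]
        exact Finset.sum_congr rfl fun i _ => Finset.sum_congr rfl fun j _ => by ring
      rw [hpt, integral_finset_sum _ (fun i _ => integrable_finset_sum _ (fun j _ =>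
        (integrable_mul_X hn hX i j).const_mul _))]
      refine Finset.sum_congr rfl fun i _ => ?_
      rw [integral_finset_sum _ (fun j _ => (integrable_mul_X hn hX i j).const_mul _)]
      exact Finset.sum_congr rfl fun j _ => integral_const_mul _ _
    rw [h2] at h1
    simp [dfact] at h1
    linarith
  rw [hint (2*M), integral_pow_gaussianReal v M, hvar]

variable {Ω : Type*} [MeasureSpace Ω] [IsProbabilityMeasure (ℙ : Measure Ω)] {n : ℕ}
  {X : Fin n → Ω → ℝ}


private lemma moment_expand (hn : 0 < n) (hX : IsCenteredGaussianVec X) (a : Fin n → ℝ) (M : ℕ) :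
    ∫ ω, (∑ i, a i * X i ω)^(2*M) ∂ℙ
      = ∑ c ∈ Finset.piAntidiag Finset.univ (2*M),
          ((Nat.multinomial Finset.univ c : ℝ) * ∏ i, a i ^ c i) *
            ∫ ω, ∏ j, X j ω ^ c j ∂ℙ := by
  have hpt : (fun ω => (∑ i, a i * X i ω)^(2*M))
      = fun ω => ∑ c ∈ Finset.piAntidiag Finset.univ (2*M),
          ((Nat.multinomial Finset.univ c : ℝ) * ∏ i, a i ^ c i) * ∏ j, X j ω ^ c j := by
    funext ω
    rw [Finset.sum_pow_eq_sum_piAntidiag]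
    refine Finset.sum_congr rfl fun c hc => ?_
    have : ∏ i, (a i * X i ω)^(c i) = (∏ i, a i ^ c i) * ∏ i, X i ω ^ c i := by
      rw [← Finset.prod_mul_distrib]
      exact Finset.prod_congr rfl fun i _ => mul_pow _ _ _
    rw [this, mul_assoc]
  rw [hpt, integral_finset_sum _ (fun c _ => ((integrable_prod_X hn hX c).const_mul _))]
  exact Finset.sum_congr rfl fun c _ => integral_const_mul _ _

private lemma key_moment (hn : 0 < n) (hX : IsCenteredGaussianVec X)
    (hcov : ∀ i j, 0 ≤ covM X i j)
    (M : ℕ) (c : Fin n → ℕ) (hc : ∑ i, c i = 2*M) :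
    (Nat.multinomial Finset.univ c : ℝ) * ∫ ω, ∏ j, X j ω ^ c j ∂ℙ
      = (dfact M : ℝ) *
        MvPolynomial.coeff (Finsupp.equivFunOnFinite.symm c) ((Qpoly X)^M) := by
  classical
  set P : MvPolynomial (Fin n) ℝ :=
    ∑ c' ∈ Finset.piAntidiag Finset.univ (2*M),
      MvPolynomial.monomial (Finsupp.equivFunOnFinite.symm c')
        ((Nat.multinomial Finset.univ c' : ℝ) * ∫ ω, ∏ j, X j ω ^ c' j ∂ℙ) with hP
  have hPeq : P = MvPolynomial.C ((dfact M : ℕ) : ℝ) * (Qpoly X)^M := by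
    apply MvPolynomial.funext
    intro a
    have h1 : MvPolynomial.eval a P = ∫ ω, (∑ i, a i * X i ω)^(2*M) ∂ℙ := by
      rw [hP, moment_expand hn hX a M, map_sum]
      refine Finset.sum_congr rfl fun c' _ => ?_
      rw [MvPolynomial.eval_monomial]
      rw [Finsupp.prod_fintype _ _ (fun i => pow_zero (a i))]
      have : ∀ i, (Finsupp.equivFunOnFinite.symm c') i = c' i := fun i => rfl
      simp_rw [this]
      ring
    have h2 : MvPolynomial.eval a (MvPolynomial.C ((dfact M : ℕ) : ℝ) * (Qpoly X)^M)
        = ∫ ω, (∑ i, a i * X i ω)^(2*M) ∂ℙ := by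
      rw [moment_linear hn hX a M]
      simp only [MvPolynomial.eval_mul, MvPolynomial.eval_C, MvPolynomial.eval_pow]
      congr 2
      simp only [Qpoly, map_sum, MvPolynomial.eval_mul, MvPolynomial.eval_C,
        MvPolynomial.eval_X]
      exact Finset.sum_congr rfl fun i _ => Finset.sum_congr rfl fun j _ => by ring
    rw [h1, h2]
  have hcoeff : MvPolynomial.coeff (Finsupp.equivFunOnFinite.symm c) P
      = (Nat.multinomial Finset.univ c : ℝ) * ∫ ω, ∏ j, X j ω ^ c j ∂ℙ := by
    rw [hP, MvPolynomial.coeff_sum]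
    rw [Finset.sum_eq_single_of_mem c
      (by rw [Finset.mem_piAntidiag]; exact ⟨hc, fun i _ => Finset.mem_univ i⟩)]
    · rw [MvPolynomial.coeff_monomial, if_pos rfl]
    · intro b _ hb
      rw [MvPolynomial.coeff_monomial,
        if_neg (fun h => hb (Finsupp.equivFunOnFinite.symm.injective h))]
  rw [← hcoeff, hPeq, MvPolynomial.coeff_C_mul]


private lemma arith_nat {M1 M2 F1 F2 mn mn1 mn2 : ℕ} (hF1 : 0 < F1) (hF2 : 0 < F2)
    (h1 : F1 * mn1 = Nat.factorial (2*M1)) (h2 : F2 * mn2 = Nat.factorial (2*M2))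
    (h : (F1*F2) * mn = Nat.factorial (2*(M1+M2))) :
    dfact (M1+M2) * Nat.choose (M1+M2) M1 * mn1 * mn2 = dfact M1 * dfact M2 * mn := by
  have c0 : (M1+M2).choose M1 * M1.factorial * M2.factorial = (M1+M2).factorial := by
    have := Nat.choose_mul_factorial_mul_factorial (Nat.le_add_right M1 M2)
    simpa [Nat.add_sub_cancel_left] using this
  have d0 := dfact_mul (M1+M2)
  have d1 := dfact_mul M1
  have d2 := dfact_mul M2
  have hKpos : 0 < F1*(2^M1*M1.factorial)*(F2*(2^M2*M2.factorial)) := by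
    have := Nat.factorial_pos M1
    have := Nat.factorial_pos M2
    positivity
  refine Nat.eq_of_mul_eq_mul_right hKpos ?_
  have key1 : dfact (M1+M2) * Nat.choose (M1+M2) M1 * mn1 * mn2 *
      (F1*(2^M1*M1.factorial)*(F2*(2^M2*M2.factorial)))
      = Nat.factorial (2*(M1+M2)) * (Nat.factorial (2*M1) * Nat.factorial (2*M2)) := by
    rw [← d0, ← h1, ← h2, ← c0, pow_add]
    ring
  have key2 : dfact M1 * dfact M2 * mn *
      (F1*(2^M1*M1.factorial)*(F2*(2^M2*M2.factorial)))
      = Nat.factorial (2*(M1+M2)) * (Nat.factorial (2*M1) * Nat.factorial (2*M2)) := by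
    rw [← d1, ← d2, ← h]
    ring
  rw [key1, key2]

end
end GPIaux

open GPIaux in
theorem stmt_2 {Ω : Type*} [MeasureSpace Ω] [IsProbabilityMeasure (ℙ : Measure Ω)]
    {n : ℕ} (X : Fin n → Ω → ℝ) (hX : IsCenteredGaussianVec X)
    (hcov : ∀ i j, i ≠ j → 0 ≤ ∫ ω, X i ω * X j ω ∂ℙ)
    (m : Fin n → ℕ) (hm : ∀ j, 1 ≤ m j)
    (k : ℕ) (hk1 : 1 ≤ k) (hk2 : k ≤ n - 1) :
    (∫ ω, ∏ j ∈ univ.filter (fun j : Fin n => (j : ℕ) < k), X j ω ^ (2 * m j) ∂ℙ) *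
      (∫ ω, ∏ j ∈ univ.filter (fun j : Fin n => k ≤ (j : ℕ)), X j ω ^ (2 * m j) ∂ℙ) ≤
    ∫ ω, ∏ j, X j ω ^ (2 * m j) ∂ℙ := by
  classical
  have hn : 0 < n := by
    rcases Nat.eq_zero_or_pos n with h | h
    · subst h; omega
    · exact h
  set c : Fin n → ℕ := fun j => 2 * m j with hc
  set c1 : Fin n → ℕ := fun j => if (j:ℕ) < k then c j else 0 with hc1
  set c2 : Fin n → ℕ := fun j => if k ≤ (j:ℕ) then c j else 0 with hc2
  set M1 : ℕ := ∑ j : Fin n, (if (j:ℕ) < k then m j else 0) with hM1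
  set M2 : ℕ := ∑ j : Fin n, (if k ≤ (j:ℕ) then m j else 0) with hM2
  have hc12 : ∀ j, c j = c1 j + c2 j := by
    intro j; simp only [hc1, hc2]; split_ifs with h1 h2 h2 <;> omega
  have hc1sum : ∑ j, c1 j = 2 * M1 := by
    rw [hM1, Finset.mul_sum]
    refine Finset.sum_congr rfl fun j _ => ?_
    simp only [hc1, hc]; split_ifs <;> simp
  have hc2sum : ∑ j, c2 j = 2 * M2 := by
    rw [hM2, Finset.mul_sum]
    refine Finset.sum_congr rfl fun j _ => ?_
    simp only [hc2, hc]; split_ifs <;> simp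
  have hcsum : ∑ j, c j = 2 * (M1 + M2) := by
    calc ∑ j, c j = ∑ j, (c1 j + c2 j) := Finset.sum_congr rfl fun j _ => hc12 j
      _ = (∑ j, c1 j) + ∑ j, c2 j := Finset.sum_add_distrib
      _ = 2 * (M1 + M2) := by rw [hc1sum, hc2sum]; ring
  -- rewrite the filtered products
  have hμ1 : (∫ ω, ∏ j ∈ univ.filter (fun j : Fin n => (j : ℕ) < k), X j ω ^ (2 * m j) ∂ℙ)
      = ∫ ω, ∏ j, X j ω ^ c1 j ∂ℙ := by
    congr 1; funext ω
    rw [Finset.prod_filter]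
    refine Finset.prod_congr rfl fun j _ => ?_
    simp only [hc1, hc]; split_ifs <;> simp
  have hμ2 : (∫ ω, ∏ j ∈ univ.filter (fun j : Fin n => k ≤ (j : ℕ)), X j ω ^ (2 * m j) ∂ℙ)
      = ∫ ω, ∏ j, X j ω ^ c2 j ∂ℙ := by
    congr 1; funext ω
    rw [Finset.prod_filter]
    refine Finset.prod_congr rfl fun j _ => ?_
    simp only [hc2, hc]; split_ifs <;> simp
  have hμ : (∫ ω, ∏ j, X j ω ^ (2 * m j) ∂ℙ) = ∫ ω, ∏ j, X j ω ^ c j ∂ℙ := rfl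
  rw [hμ1, hμ2, hμ]
  -- covariance entries are nonnegative
  have hcovnn : ∀ i j, 0 ≤ covM X i j := by
    intro i j
    by_cases hij : i = j
    · subst hij; exact integral_nonneg fun ω => mul_self_nonneg _
    · exact hcov i j hij
  -- exponent Finsupps
  set d : Fin n →₀ ℕ := Finsupp.equivFunOnFinite.symm c with hd
  set d1 : Fin n →₀ ℕ := Finsupp.equivFunOnFinite.symm c1 with hd1
  set d2 : Fin n →₀ ℕ := Finsupp.equivFunOnFinite.symm c2 with hd2
  have hdd : d = d1 + d2 := by
    apply Finsupp.ext; intro j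
    show c j = c1 j + c2 j
    exact hc12 j
  -- the quadratic form decomposition
  set T : Fin n → Fin n → MvPolynomial (Fin n) ℝ :=
    fun i j => MvPolynomial.C (covM X i j) * MvPolynomial.X i * MvPolynomial.X j with hT
  set Q1 : MvPolynomial (Fin n) ℝ :=
    ∑ i : Fin n, ∑ j : Fin n, if (i:ℕ) < k ∧ (j:ℕ) < k then T i j else 0 with hQ1
  set Q2 : MvPolynomial (Fin n) ℝ :=
    ∑ i : Fin n, ∑ j : Fin n, if k ≤ (i:ℕ) ∧ k ≤ (j:ℕ) then T i j else 0 with hQ2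
  set Qx : MvPolynomial (Fin n) ℝ :=
    ∑ i : Fin n, ∑ j : Fin n, if ((i:ℕ) < k ∧ (j:ℕ) < k) ∨ (k ≤ (i:ℕ) ∧ k ≤ (j:ℕ)) then 0 else T i j with hQx
  have hdecomp : Qpoly X = Q1 + Q2 + Qx := by
    rw [hQ1, hQ2, hQx, Qpoly, ← Finset.sum_add_distrib, ← Finset.sum_add_distrib]
    refine Finset.sum_congr rfl fun i _ => ?_
    rw [← Finset.sum_add_distrib, ← Finset.sum_add_distrib]
    refine Finset.sum_congr rfl fun j _ => ?_
    by_cases h1 : (i:ℕ) < k ∧ (j:ℕ) < k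
    · simp [h1, hT, not_le.mpr h1.1]
    · by_cases h2 : k ≤ (i:ℕ) ∧ k ≤ (j:ℕ)
      · simp [h1, h2, hT]
      · simp [h1, h2, hT]
  have hNNT : ∀ i j, NN (T i j) := fun i j =>
    ((NN.C (hcovnn i j)).mul (NN.X i)).mul (NN.X j)
  have hNN1 : NN Q1 := NN.sum fun i _ => NN.sum fun j _ => by
    split_ifs with h
    · exact hNNT i j
    · exact NN.zero
  have hNN2 : NN Q2 := NN.sum fun i _ => NN.sum fun j _ => by
    split_ifs with h
    · exact hNNT i j
    · exact NN.zero
  have hNNx : NN Qx := NN.sum fun i _ => NN.sum fun j _ => by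
    split_ifs with h
    · exact NN.zero
    · exact hNNT i j
  -- support of the generators
  have hsuppT : ∀ i j, (T i j).support ⊆ {Finsupp.single i 1 + Finsupp.single j 1} := by
    intro i j
    have hXX : T i j = MvPolynomial.monomial (Finsupp.single i 1 + Finsupp.single j 1)
        (covM X i j) := by
      rw [hT]
      show MvPolynomial.C (covM X i j) * MvPolynomial.X i * MvPolynomial.X j = _
      rw [MvPolynomial.X, MvPolynomial.X, MvPolynomial.C_mul_monomial,
        MvPolynomial.monomial_mul, mul_one, mul_one]
    rw [hXX]
    exact MvPolynomial.support_monomial_subset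
  -- weights
  set w1 : Fin n → ℕ := fun i => if (i:ℕ) < k then 1 else 0 with hw1
  set w2 : Fin n → ℕ := fun i => if k ≤ (i:ℕ) then 1 else 0 with hw2
  have hWsingle : ∀ (w : Fin n → ℕ) (i : Fin n), W w (Finsupp.single i 1) = w i := by
    intro w i
    unfold W
    rw [Finset.sum_eq_single i]
    · simp
    · intro t _ ht
      rw [Finsupp.single_apply, if_neg (fun h => ht h.symm)]
      simp
    · intro h; exact absurd (Finset.mem_univ i) h
  have hWpair : ∀ (w : Fin n → ℕ) (i j : Fin n),
      W w (Finsupp.single i 1 + Finsupp.single j 1) = w i + w j := by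
    intro w i j
    rw [W_add, hWsingle, hWsingle]
  -- the "other block" parts have positive weight
  have hsupp2x : ∀ e ∈ (Q2 + Qx).support, 1 ≤ W w2 e := by
    intro e he
    have h0 := MvPolynomial.support_add he
    rw [Finset.mem_union] at h0
    have hgen : ∀ (f : Fin n → Fin n → MvPolynomial (Fin n) ℝ),
        (∀ i j, ∀ e' ∈ (f i j).support, 1 ≤ W w2 e') →
        ∀ e' ∈ (∑ i, ∑ j, f i j : MvPolynomial (Fin n) ℝ).support, 1 ≤ W w2 e' := by
      intro f hf e' he'
      have h1 := MvPolynomial.support_sum he'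
      rw [Finset.mem_biUnion] at h1
      obtain ⟨i, -, h2⟩ := h1
      have h3 := MvPolynomial.support_sum h2
      rw [Finset.mem_biUnion] at h3
      obtain ⟨j, -, h4⟩ := h3
      exact hf i j e' h4
    rcases h0 with h | h
    · refine hgen _ (fun i j e' he' => ?_) e h
      by_cases hcond : k ≤ (i:ℕ) ∧ k ≤ (j:ℕ)
      · rw [if_pos hcond] at he'
        have := hsuppT i j he'
        rw [Finset.mem_singleton] at this
        subst this
        rw [hWpair, hw2]
        simp only
        rw [if_pos hcond.1, if_pos hcond.2]
        norm_num
      · rw [if_neg hcond] at he'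
        simp at he'
    · refine hgen _ (fun i j e' he' => ?_) e h
      by_cases hcond : ((i:ℕ) < k ∧ (j:ℕ) < k) ∨ (k ≤ (i:ℕ) ∧ k ≤ (j:ℕ))
      · rw [if_pos hcond] at he'
        simp at he'
      · rw [if_neg hcond] at he'
        have := hsuppT i j he'
        rw [Finset.mem_singleton] at this
        subst this
        rw [hWpair, hw2]
        simp only
        split_ifs <;> omega
  have hsupp1x : ∀ e ∈ (Q1 + Qx).support, 1 ≤ W w1 e := by
    intro e he
    have h0 := MvPolynomial.support_add he
    rw [Finset.mem_union] at h0
    have hgen : ∀ (f : Fin n → Fin n → MvPolynomial (Fin n) ℝ),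
        (∀ i j, ∀ e' ∈ (f i j).support, 1 ≤ W w1 e') →
        ∀ e' ∈ (∑ i, ∑ j, f i j : MvPolynomial (Fin n) ℝ).support, 1 ≤ W w1 e' := by
      intro f hf e' he'
      have h1 := MvPolynomial.support_sum he'
      rw [Finset.mem_biUnion] at h1
      obtain ⟨i, -, h2⟩ := h1
      have h3 := MvPolynomial.support_sum h2
      rw [Finset.mem_biUnion] at h3
      obtain ⟨j, -, h4⟩ := h3
      exact hf i j e' h4
    rcases h0 with h | h
    · refine hgen _ (fun i j e' he' => ?_) e h
      by_cases hcond : (i:ℕ) < k ∧ (j:ℕ) < k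
      · rw [if_pos hcond] at he'
        have := hsuppT i j he'
        rw [Finset.mem_singleton] at this
        subst this
        rw [hWpair, hw1]
        simp only
        rw [if_pos hcond.1, if_pos hcond.2]
        norm_num
      · rw [if_neg hcond] at he'
        simp at he'
    · refine hgen _ (fun i j e' he' => ?_) e h
      by_cases hcond : ((i:ℕ) < k ∧ (j:ℕ) < k) ∨ (k ≤ (i:ℕ) ∧ k ≤ (j:ℕ))
      · rw [if_pos hcond] at he'
        simp at he'
      · rw [if_neg hcond] at he'
        have := hsuppT i j he'
        rw [Finset.mem_singleton] at this
        subst this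
        rw [hWpair, hw1]
        simp only
        split_ifs <;> omega
  -- weights of our exponent vectors
  have hWd1 : W w2 d1 = 0 := by
    unfold W
    refine Finset.sum_eq_zero fun i _ => ?_
    show w2 i * c1 i = 0
    simp only [hw2, hc1]
    split_ifs with h1 h2 <;> omega
  have hWd2 : W w1 d2 = 0 := by
    unfold W
    refine Finset.sum_eq_zero fun i _ => ?_
    show w1 i * c2 i = 0
    simp only [hw1, hc2]
    split_ifs with h1 h2 <;> omega
  -- coefficient quantities
  set A : ℝ := MvPolynomial.coeff d ((Qpoly X)^(M1+M2)) with hA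
  set B1 : ℝ := MvPolynomial.coeff d1 (Q1^M1) with hB1
  set B2 : ℝ := MvPolynomial.coeff d2 (Q2^M2) with hB2
  -- restriction identities
  have hA1 : MvPolynomial.coeff d1 ((Qpoly X)^M1) = B1 := by
    have hdec : Qpoly X = Q1 + (Q2 + Qx) := by rw [hdecomp]; ring
    rw [hdec, coeff_restrict hsupp2x M1 hWd1, hB1]
  have hA2 : MvPolynomial.coeff d2 ((Qpoly X)^M2) = B2 := by
    have hdec : Qpoly X = Q2 + (Q1 + Qx) := by rw [hdecomp]; ring
    rw [hdec, coeff_restrict hsupp1x M2 hWd2, hB2]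
  -- the chain of coefficient inequalities
  have hB1nn : 0 ≤ B1 := (hNN1.pow M1) d1
  have hB2nn : 0 ≤ B2 := (hNN2.pow M2) d2
  have hstepa : B1 * B2 ≤ MvPolynomial.coeff d (Q1^M1 * Q2^M2) := by
    rw [hdd]
    exact coeff_mul_ge (hNN1.pow M1) (hNN2.pow M2) d1 d2
  have hstepb : ((M1+M2).choose M1 : ℝ) * MvPolynomial.coeff d (Q1^M1 * Q2^M2)
      ≤ MvPolynomial.coeff d ((Q1 + Q2)^(M1+M2)) :=
    coeff_add_pow_ge hNN1 hNN2 M1 M2 d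
  have hstepc : MvPolynomial.coeff d ((Q1 + Q2)^(M1+M2)) ≤ A := by
    have h := coeff_add_pow_ge (hNN1.add hNN2) hNNx (M1+M2) 0 d
    rw [Nat.add_zero, Nat.choose_self, pow_zero, mul_one] at h
    rw [hA, hdecomp]
    simpa using h
  have hcore : ((M1+M2).choose M1 : ℝ) * (B1 * B2) ≤ A := by
    calc ((M1+M2).choose M1 : ℝ) * (B1 * B2)
        ≤ ((M1+M2).choose M1 : ℝ) * MvPolynomial.coeff d (Q1^M1 * Q2^M2) := by
          exact mul_le_mul_of_nonneg_left hstepa (by positivity)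
      _ ≤ MvPolynomial.coeff d ((Q1 + Q2)^(M1+M2)) := hstepb
      _ ≤ A := hstepc
  -- moment identities
  set μ : ℝ := ∫ ω, ∏ j', X j' ω ^ c j' ∂ℙ with hμdef
  set μ1 : ℝ := ∫ ω, ∏ j', X j' ω ^ c1 j' ∂ℙ with hμ1def
  set μ2 : ℝ := ∫ ω, ∏ j', X j' ω ^ c2 j' ∂ℙ with hμ2def
  set mn : ℕ := Nat.multinomial Finset.univ c with hmn
  set mn1 : ℕ := Nat.multinomial Finset.univ c1 with hmn1
  set mn2 : ℕ := Nat.multinomial Finset.univ c2 with hmn2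
  have he : (mn : ℝ) * μ = (dfact (M1+M2) : ℝ) * A := key_moment hn hX hcovnn (M1+M2) c hcsum
  have he1 : (mn1 : ℝ) * μ1 = (dfact M1 : ℝ) * B1 := by
    rw [← hA1]; exact key_moment hn hX hcovnn M1 c1 hc1sum
  have he2 : (mn2 : ℝ) * μ2 = (dfact M2 : ℝ) * B2 := by
    rw [← hA2]; exact key_moment hn hX hcovnn M2 c2 hc2sum
  -- arithmetic identity
  have hF12 : (∏ j, Nat.factorial (c j)) = (∏ j, Nat.factorial (c1 j)) *
      ∏ j, Nat.factorial (c2 j) := by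
    rw [← Finset.prod_mul_distrib]
    refine Finset.prod_congr rfl fun j _ => ?_
    rw [hc12 j]
    simp only [hc1, hc2]
    rcases lt_or_ge ((j:ℕ)) k with hj | hj
    · rw [if_pos hj, if_neg (by omega), Nat.add_zero, Nat.factorial_zero, mul_one]
    · rw [if_neg (by omega), if_pos hj, Nat.zero_add, Nat.factorial_zero, one_mul]
  have hs1 := Nat.multinomial_spec Finset.univ c1
  have hs2 := Nat.multinomial_spec Finset.univ c2
  have hs := Nat.multinomial_spec Finset.univ c
  rw [hc1sum] at hs1
  rw [hc2sum] at hs2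
  rw [hcsum] at hs
  rw [hF12] at hs
  have harith : dfact (M1+M2) * Nat.choose (M1+M2) M1 * mn1 * mn2
      = dfact M1 * dfact M2 * mn :=
    arith_nat (Finset.prod_pos fun j _ => Nat.factorial_pos _)
      (Finset.prod_pos fun j _ => Nat.factorial_pos _) hs1 hs2 hs
  have harithR : (dfact (M1+M2) : ℝ) * ((M1+M2).choose M1 : ℝ) * mn1 * mn2
      = (dfact M1 : ℝ) * dfact M2 * mn := by exact_mod_cast harith
  -- final computation
  have hmnpos : (0:ℝ) < mn := by exact_mod_cast Nat.multinomial_pos _ _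
  have hmn1pos : (0:ℝ) < mn1 := by exact_mod_cast Nat.multinomial_pos _ _
  have hmn2pos : (0:ℝ) < mn2 := by exact_mod_cast Nat.multinomial_pos _ _
  have hdfnn : (0:ℝ) ≤ (dfact (M1+M2) : ℝ) := Nat.cast_nonneg _
  have hfinal : μ1 * μ2 * ((mn1:ℝ) * mn2 * mn) ≤ μ * ((mn1:ℝ) * mn2 * mn) := by
    calc μ1 * μ2 * ((mn1:ℝ) * mn2 * mn)
        = ((dfact M1 : ℝ) * B1) * ((dfact M2 : ℝ) * B2) * mn := by
          linear_combination (μ2 * (mn:ℝ) * mn2) * he1 + ((dfact M1 : ℝ) * B1 * (mn:ℝ)) * he2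
      _ = ((dfact (M1+M2) : ℝ) * mn1 * mn2) * (((M1+M2).choose M1 : ℝ) * (B1 * B2)) := by
          linear_combination (-(B1 * B2)) * harithR
      _ ≤ ((dfact (M1+M2) : ℝ) * mn1 * mn2) * A := by
          refine mul_le_mul_of_nonneg_left hcore ?_
          positivity
      _ = μ * ((mn1:ℝ) * mn2 * mn) := by linear_combination ((mn1:ℝ) * mn2) * he.symm
  exact le_of_mul_le_mul_right hfinal (by positivity)
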